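/- arXiv:2205.07167 — 4 statements merged into one kernel-verified Lean document; each statement's English description precedes it below -/
import Mathlib

section
/- Let A ∈ ℤ_{≥0}^{m×d} be a nonnegative integer matrix, let M' ⊆ ker A ∩ ℤ^d be a Markov basis for A (i.e., G(F_{A,c}, M') is connected for every c ∈ ℤ^m), and let M ⊆ ker A ∩ ℤ^d be a finite set of moves. Suppose that for every m' ∈ M', writing m' = m'₊ − m'₋ with m'₊ and m'₋ the (disjointly supported, nonnegative) positive and negative parts of m', there is a finite sequence of moves from ±M leading from m'₊ to m'₋ in which every intermediate integer vector has all entries ≥ −1. Then for every b ∈ ℤ^m, any two tables in F_{A,b} can be joined by a finite sequence of moves from ±M in which every intermediate integer vector u satisfies Au = b and u ≥ −1 componentwise. -/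
/-- `u` lies in the fiber `F_{A,b}`: it is componentwise nonnegative and `A u = b`. -/
def inFiber {m d : ℕ} (A : Matrix (Fin m) (Fin d) ℤ) (b : Fin m → ℤ) (u : Fin d → ℤ) : Prop :=
  (∀ i, 0 ≤ u i) ∧ A.mulVec u = b

/-- `u` lies in the extended fiber `F̄_{A,b}`: componentwise `≥ -1` and `A u = b`. -/
def inExtFiber {m d : ℕ} (A : Matrix (Fin m) (Fin d) ℤ) (b : Fin m → ℤ) (u : Fin d → ℤ) : Prop :=
  (∀ i, (-1 : ℤ) ≤ u i) ∧ A.mulVec u = b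

/-- One edge of the fiber graph with move set `M` and vertex predicate `P`:
both endpoints satisfy `P` and they differ by an element of `±M`. -/
def moveStep {d : ℕ} (M : Finset (Fin d → ℤ)) (P : (Fin d → ℤ) → Prop)
    (u v : Fin d → ℤ) : Prop :=
  P u ∧ P v ∧ (u - v ∈ M ∨ v - u ∈ M)

/-- The fiber graph with vertex set `{u | P u}` and moves `M` is connected. -/
def connectsOn {d : ℕ} (M : Finset (Fin d → ℤ)) (P : (Fin d → ℤ) → Prop) : Prop :=
  ∀ u v, P u → P v → Relation.ReflTransGen (moveStep M P) u v

/-- The positive part `v₊` of an integer vector. -/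
def vecPosPart {d : ℕ} (v : Fin d → ℤ) : Fin d → ℤ := fun i => max (v i) 0

/-- The negative part `v₋` of an integer vector, so that `v = v₊ - v₋`. -/
def vecNegPart {d : ℕ} (v : Fin d → ℤ) : Fin d → ℤ := fun i => max (-v i) 0

lemma moveStep_symm' {d : ℕ} {M : Finset (Fin d → ℤ)} {P : (Fin d → ℤ) → Prop} :
    Symmetric (moveStep M P) := fun _ _ h => ⟨h.2.1, h.1, h.2.2.symm⟩

/-- Translating a `≥ -1`-path by a nonnegative vector `t` gives a path in the
extended fiber, provided the starting point lies on the fiber. -/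
lemma translate_path {m d : ℕ} (A : Matrix (Fin m) (Fin d) ℤ) (b : Fin m → ℤ)
    (M : Finset (Fin d → ℤ)) (hM : ∀ x ∈ M, A.mulVec x = 0)
    (t : Fin d → ℤ) (ht : ∀ i, 0 ≤ t i) {p q : Fin d → ℤ}
    (h : Relation.ReflTransGen (moveStep M (fun u => ∀ i, (-1 : ℤ) ≤ u i)) p q)
    (hp : A.mulVec (t + p) = b) :
    Relation.ReflTransGen (moveStep M (inExtFiber A b)) (t + p) (t + q) ∧
      A.mulVec (t + q) = b := by
  induction h with
  | refl => exact ⟨Relation.ReflTransGen.refl, hp⟩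
  | @tail q' q hsteps hstep ih =>
    obtain ⟨hpath, hq'⟩ := ih
    have hdiff : A.mulVec (q - q') = 0 := by
      rcases hstep.2.2 with h | h
      · have h0 := hM _ h
        have : q - q' = -(q' - q) := by abel
        rw [this, Matrix.mulVec_neg, h0, neg_zero]
      · exact hM _ h
    have hq : A.mulVec (t + q) = b := by
      have hsum : t + q = (t + q') + (q - q') := by abel
      rw [hsum, Matrix.mulVec_add, hq', hdiff, add_zero]
    have hedge : moveStep M (inExtFiber A b) (t + q') (t + q) := by
      refine ⟨⟨fun i => ?_, hq'⟩, ⟨fun i => ?_, hq⟩, ?_⟩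
      · have := hstep.1 i; have := ht i
        simp only [Pi.add_apply]; linarith
      · have := hstep.2.1 i; have := ht i
        simp only [Pi.add_apply]; linarith
      · have e1 : (t + q') - (t + q) = q' - q := by abel
        have e2 : (t + q) - (t + q') = q - q' := by abel
        rw [e1, e2]; exact hstep.2.2
    exact ⟨hpath.tail hedge, hq⟩

/-- Let `A` be a nonnegative integer matrix, `M'` a Markov basis for `A`, and
`M ⊆ ker A ∩ ℤ^d` a finite set of moves.  If for every `m' ∈ M'` the positive
part `m'₊` can be taken to the negative part `m'₋` by a sequence of moves from
`±M` whose intermediate vectors all have entries `≥ -1`, then for every `b`,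
any two tables of `F_{A,b}` are joined by a sequence of moves from `±M` whose
intermediate vectors `u` all satisfy `A u = b` and `u ≥ -1` componentwise. -/
theorem extConnect_of_markovBasis_parts_connected {m d : ℕ}
    (A : Matrix (Fin m) (Fin d) ℤ) (hA : ∀ i j, 0 ≤ A i j)
    (M' : Finset (Fin d → ℤ)) (hM' : ∀ x ∈ M', A.mulVec x = 0)
    (hMarkov : ∀ c : Fin m → ℤ, connectsOn M' (inFiber A c))
    (M : Finset (Fin d → ℤ)) (hM : ∀ x ∈ M, A.mulVec x = 0)
    (hparts : ∀ x ∈ M',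
      Relation.ReflTransGen (moveStep M (fun u => ∀ i, (-1 : ℤ) ≤ u i))
        (vecPosPart x) (vecNegPart x))
    (b : Fin m → ℤ) :
    ∀ u v, inFiber A b u → inFiber A b v →
      Relation.ReflTransGen (moveStep M (inExtFiber A b)) u v := by
  -- Key claim: any single Markov step on the fiber is replaced by an ext-fiber path.
  have key : ∀ p q : Fin d → ℤ, inFiber A b p → inFiber A b q → p - q ∈ M' →
      Relation.ReflTransGen (moveStep M (inExtFiber A b)) p q := by
    intro p q hp hq hx
    set x : Fin d → ℤ := p - q with hxdef
    set t : Fin d → ℤ := fun i => p i - max (x i) 0 with htdef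
    have hxi : ∀ i, x i = p i - q i := fun i => rfl
    have ht : ∀ i, 0 ≤ t i := by
      intro i
      have h1 := hp.1 i
      have h2 := hq.1 i
      have := hxi i
      simp only [htdef]
      omega
    have hposeq : t + vecPosPart x = p := by
      funext i
      simp only [Pi.add_apply, htdef, vecPosPart]
      omega
    have hnegeq : t + vecNegPart x = q := by
      funext i
      have := hxi i
      simp only [Pi.add_apply, htdef, vecNegPart, vecPosPart]
      omega
    have hstart : A.mulVec (t + vecPosPart x) = b := by rw [hposeq]; exact hp.2
    have := translate_path A b M hM t ht (hparts x hx) hstart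
    rw [hposeq, hnegeq] at this
    exact this.1
  -- Now transport the Markov path.
  intro u v hu hv
  have hpath := hMarkov b u v hu hv
  induction hpath with
  | refl => exact Relation.ReflTransGen.refl
  | @tail q' q hsteps hstep ih =>
    obtain ⟨hq', hqf, hor⟩ := hstep
    refine Relation.ReflTransGen.trans (ih hq') ?_
    rcases hor with h | h
    · exact key q' q hq' hqf h
    · exact (@Relation.ReflTransGen.stdSymm _ _ ⟨fun _ _ h => moveStep_symm' h⟩).symm _ _ (key q q' hqf hq' h)
end

section
/- Let b²₊ and b²₋ be the 3×4×6 nonnegative integer tables (indexed by slice i ∈ {1,2,3}, row j ∈ {1,2,3,4}, column k ∈ {1,…,6}) with nonzero entries: b²₊ has entries 1 at (1;1,1),(1;2,2),(1;3,3),(1;4,4),(2;1,6),(2;2,3),(2;3,6),(2;4,1),(2;4,5),(3;1,2),(3;2,5),(3;3,4) and entry 2 at (3;4,6); b²₋ has entries 1 at (1;1,2),(1;2,3),(1;3,4),(1;4,1),(2;1,1),(2;2,5),(2;3,3),(3;1,6),(3;2,2),(3;3,6),(3;4,4),(3;4,5) and entry 2 at (2;4,6). Then b²₋ = b²₊ +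 m(2,3;2,4;5,6) + m(2,3;3,4;4,6) + m(2,3;1,2;2,6) − m(1,2;3,4;1,4) − m(1,2;1,3;1,3) + m(1,2;1,2;2,3), where m(i,i';j,j';k,k') denotes the corresponding basic move, and applying these six signed basic moves to b²₊ in the listed order, every intermediate table has all entries ≥ −1. In particular, b²₊ and b²₋ are connected by basic moves if cell counts X_{ijk} ≥ −1 are allowed. -/
/-- The three two-way margins of an `I × J × K` integer table:
`((Σ_i u_{ijk})_{jk}, (Σ_j u_{ijk})_{ik}, (Σ_k u_{ijk})_{ij})`.
This is the linear map given by the design matrix of the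
no-three-way interaction model. -/
def margins {I J K : ℕ} (u : Fin I × Fin J × Fin K → ℤ) :
    (Fin J × Fin K → ℤ) × (Fin I × Fin K → ℤ) × (Fin I × Fin J → ℤ) :=
  ⟨fun p => ∑ i, u (i, p.1, p.2),
   fun p => ∑ j, u (p.1, j, p.2),
   fun p => ∑ k, u (p.1, p.2, k)⟩

/-- The basic move `(i,i'; j,j'; k,k')` of a `2 × 2 × 2` minor:
`+1` at `(i,j,k), (i,j',k'), (i',j',k), (i',j,k')` and
`-1` at `(i,j',k), (i,j,k'), (i',j,k), (i',j',k')`, and `0` elsewhere. -/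
def basicMove {I J K : ℕ} (i i' : Fin I) (j j' : Fin J) (k k' : Fin K) :
    Fin I × Fin J × Fin K → ℤ :=
  fun p =>
    (if p = (i, j, k) then 1 else 0) + (if p = (i, j', k') then 1 else 0) +
      (if p = (i', j', k) then 1 else 0) + (if p = (i', j, k') then 1 else 0) -
      (if p = (i, j', k) then 1 else 0) - (if p = (i, j, k') then 1 else 0) -
      (if p = (i', j, k) then 1 else 0) - (if p = (i', j', k') then 1 else 0)

/-- The set of all basic moves of `2 × 2 × 2` minors of an `I × J × K` table. -/
def basicMoves (I J K : ℕ) : Set (Fin I × Fin J × Fin K → ℤ) :=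
  {x | ∃ i i' j j' k k', i ≠ i' ∧ j ≠ j' ∧ k ≠ k' ∧ x = basicMove i i' j j' k k'}

/-- One edge of the fiber graph on tables with move set `M` and vertex
predicate `P`: both endpoints satisfy `P` and they differ by an element of `±M`. -/
def tblStep {I J K : ℕ} (M : Set (Fin I × Fin J × Fin K → ℤ))
    (P : (Fin I × Fin J × Fin K → ℤ) → Prop)
    (u v : Fin I × Fin J × Fin K → ℤ) : Prop :=
  P u ∧ P v ∧ (u - v ∈ M ∨ v - u ∈ M)

/-- The fiber graph on `{u | P u}` with moves `M` is connected. -/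
def tblConnectsOn {I J K : ℕ} (M : Set (Fin I × Fin J × Fin K → ℤ))
    (P : (Fin I × Fin J × Fin K → ℤ) → Prop) : Prop :=
  ∀ u v, P u → P v → Relation.ReflTransGen (tblStep M P) u v

/-- The positive part `b²₊` of the indispensable move `b²` for `3 × 4 × 6`
tables under the no-three-way interaction model. -/
def b2plus : Fin 3 × Fin 4 × Fin 6 → ℤ :=
  fun p =>
    (![![![1, 0, 0, 0, 0, 0], ![0, 1, 0, 0, 0, 0], ![0, 0, 1, 0, 0, 0], ![0, 0, 0, 1, 0, 0]],
       ![![0, 0, 0, 0, 0, 1], ![0, 0, 1, 0, 0, 0], ![0, 0, 0, 0, 0, 1], ![1, 0, 0, 0, 1, 0]],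
       ![![0, 1, 0, 0, 0, 0], ![0, 0, 0, 0, 1, 0], ![0, 0, 0, 1, 0, 0], ![0, 0, 0, 0, 0, 2]]] :
      Fin 3 → Fin 4 → Fin 6 → ℤ) p.1 p.2.1 p.2.2

/-- The negative part `b²₋` of the indispensable move `b²` for `3 × 4 × 6`
tables under the no-three-way interaction model. -/
def b2minus : Fin 3 × Fin 4 × Fin 6 → ℤ :=
  fun p =>
    (![![![0, 1, 0, 0, 0, 0], ![0, 0, 1, 0, 0, 0], ![0, 0, 0, 1, 0, 0], ![1, 0, 0, 0, 0, 0]],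
       ![![1, 0, 0, 0, 0, 0], ![0, 0, 0, 0, 1, 0], ![0, 0, 1, 0, 0, 0], ![0, 0, 0, 0, 0, 2]],
       ![![0, 0, 0, 0, 0, 1], ![0, 1, 0, 0, 0, 0], ![0, 0, 0, 0, 0, 1], ![0, 0, 0, 1, 1, 0]]] :
      Fin 3 → Fin 4 → Fin 6 → ℤ) p.1 p.2.1 p.2.2

/-- First intermediate table: `b²₊ + m(2,3;2,4;5,6)` (1-based indices). -/
def b2s1 : Fin 3 × Fin 4 × Fin 6 → ℤ := b2plus + basicMove 1 2 1 3 4 5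
/-- Second intermediate table: add `m(2,3;3,4;4,6)`. -/
def b2s2 : Fin 3 × Fin 4 × Fin 6 → ℤ := b2s1 + basicMove 1 2 2 3 3 5
/-- Third intermediate table: add `m(2,3;1,2;2,6)`. -/
def b2s3 : Fin 3 × Fin 4 × Fin 6 → ℤ := b2s2 + basicMove 1 2 0 1 1 5
/-- Fourth intermediate table: subtract `m(1,2;3,4;1,4)`. -/
def b2s4 : Fin 3 × Fin 4 × Fin 6 → ℤ := b2s3 - basicMove 0 1 2 3 0 3
/-- Fifth intermediate table: subtract `m(1,2;1,3;1,3)`. -/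
def b2s5 : Fin 3 × Fin 4 × Fin 6 → ℤ := b2s4 - basicMove 0 1 0 2 0 2

set_option maxHeartbeats 4000000 in
/-- `b²₋ = b²₊ + m(2,3;2,4;5,6) + m(2,3;3,4;4,6) + m(2,3;1,2;2,6)
- m(1,2;3,4;1,4) - m(1,2;1,3;1,3) + m(1,2;1,2;2,3)` (1-based indices; the
`basicMove` arguments below are the 0-based versions), applying these six
signed basic moves in the listed order keeps all entries `≥ -1` at every
intermediate step, and hence `b²₊` and `b²₋` are connected by basic moves
once cell counts are allowed to be `-1`. -/
theorem b2minus_reachable_from_b2plus :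
    b2minus = b2plus + basicMove 1 2 1 3 4 5 + basicMove 1 2 2 3 3 5
        + basicMove 1 2 0 1 1 5 - basicMove 0 1 2 3 0 3
        - basicMove 0 1 0 2 0 2 + basicMove 0 1 0 1 1 2 ∧
    (∀ s ∈ [b2s1, b2s2, b2s3, b2s4, b2s5], ∀ p, (-1 : ℤ) ≤ s p) ∧
    Relation.ReflTransGen
      (tblStep (basicMoves 3 4 6)
        (fun w => (∀ p, (-1 : ℤ) ≤ w p) ∧ margins w = margins b2plus))
      b2plus b2minus := by
  have P0 : (∀ p, (-1 : ℤ) ≤ b2plus p) ∧ margins b2plus = margins b2plus := by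
    constructor
    · decide
    · rfl
  have P1 : (∀ p, (-1 : ℤ) ≤ b2s1 p) ∧ margins b2s1 = margins b2plus := by decide
  have P2 : (∀ p, (-1 : ℤ) ≤ b2s2 p) ∧ margins b2s2 = margins b2plus := by decide
  have P3 : (∀ p, (-1 : ℤ) ≤ b2s3 p) ∧ margins b2s3 = margins b2plus := by decide
  have P4 : (∀ p, (-1 : ℤ) ≤ b2s4 p) ∧ margins b2s4 = margins b2plus := by decide
  have P5 : (∀ p, (-1 : ℤ) ≤ b2s5 p) ∧ margins b2s5 = margins b2plus := by decide
  have P6 : (∀ p, (-1 : ℤ) ≤ b2minus p) ∧ margins b2minus = margins b2plus := by decide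
  have heq : b2minus = b2s5 + basicMove 0 1 0 1 1 2 := by decide
  refine ⟨?_, ?_, ?_⟩
  · show b2minus = b2s5 + basicMove 0 1 0 1 1 2
    exact heq
  · intro s hs
    simp only [List.mem_cons, List.not_mem_nil, or_false] at hs
    rcases hs with h|h|h|h|h <;> subst h
    exacts [P1.1, P2.1, P3.1, P4.1, P5.1]
  · have mem : ∀ (i i' : Fin 3) (j j' : Fin 4) (k k' : Fin 6), i ≠ i' → j ≠ j' → k ≠ k' →
        basicMove i i' j j' k k' ∈ basicMoves 3 4 6 := by
      intro i i' j j' k k' h1 h2 h3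
      exact ⟨i, i', j, j', k, k', h1, h2, h3, rfl⟩
    have step : ∀ (u v : Fin 3 × Fin 4 × Fin 6 → ℤ),
        ((∀ p, (-1 : ℤ) ≤ u p) ∧ margins u = margins b2plus) →
        ((∀ p, (-1 : ℤ) ≤ v p) ∧ margins v = margins b2plus) →
        (u - v ∈ basicMoves 3 4 6 ∨ v - u ∈ basicMoves 3 4 6) →
        tblStep (basicMoves 3 4 6)
          (fun w => (∀ p, (-1 : ℤ) ≤ w p) ∧ margins w = margins b2plus) u v :=
      fun u v hu hv h => ⟨hu, hv, h⟩
    have s1 : b2s1 - b2plus = basicMove 1 2 1 3 4 5 := by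
      show b2plus + _ - b2plus = _; ring
    have s2 : b2s2 - b2s1 = basicMove 1 2 2 3 3 5 := by
      show b2s1 + _ - b2s1 = _; ring
    have s3 : b2s3 - b2s2 = basicMove 1 2 0 1 1 5 := by
      show b2s2 + _ - b2s2 = _; ring
    have s4 : b2s3 - b2s4 = basicMove 0 1 2 3 0 3 := by
      show b2s3 - (b2s3 - _) = _; ring
    have s5 : b2s4 - b2s5 = basicMove 0 1 0 2 0 2 := by
      show b2s4 - (b2s4 - _) = _; ring
    have s6 : b2minus - b2s5 = basicMove 0 1 0 1 1 2 := by
      rw [heq]; ring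
    refine Relation.ReflTransGen.head (step _ _ P0 P1 (Or.inr (s1 ▸ mem _ _ _ _ _ _ (by decide) (by decide) (by decide)))) ?_
    refine Relation.ReflTransGen.head (step _ _ P1 P2 (Or.inr (s2 ▸ mem _ _ _ _ _ _ (by decide) (by decide) (by decide)))) ?_
    refine Relation.ReflTransGen.head (step _ _ P2 P3 (Or.inr (s3 ▸ mem _ _ _ _ _ _ (by decide) (by decide) (by decide)))) ?_
    refine Relation.ReflTransGen.head (step _ _ P3 P4 (Or.inl (s4 ▸ mem _ _ _ _ _ _ (by decide) (by decide) (by decide)))) ?_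
    refine Relation.ReflTransGen.head (step _ _ P4 P5 (Or.inl (s5 ▸ mem _ _ _ _ _ _ (by decide) (by decide) (by decide)))) ?_
    exact Relation.ReflTransGen.single (step _ _ P5 P6 (Or.inr (s6 ▸ mem _ _ _ _ _ _ (by decide) (by decide) (by decide))))
end

section
/- Let T be the 3×3×3 nonnegative integer table defined by T_{ijk} = 3 if k − j ≡ i − 1 (mod 3) and T_{ijk} = 0 otherwise (so each of the three slices of T is 3 times a permutation matrix, the three permutation patterns forming a Latin square). Then: (1) for every basic move m of a 2×2×2 minor, the table T + m has a negative entry, so T is an isolated vertex of the fiber graph G(F_{A,b}, M_B), where A is the no-three-way interaction design matrix, b is the vector of two-way margins of T, and M_B is the set of all basic moves; and (2) F_{A,b} contains a table different from T. Consequently, the set of basic moves does not connect all tables in F_{A,b}. -/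
/-- The `3 × 3 × 3` table with `T_{ijk} = 3` when `k - j ≡ i - 1 (mod 3)`
(in 1-based indexing; equivalently `k - j ≡ i (mod 3)` for the 0-based
indices used here) and `T_{ijk} = 0` otherwise.  Each slice is `3` times a
permutation matrix and the three permutation patterns form a Latin square. -/
def latinTable : Fin 3 × Fin 3 × Fin 3 → ℤ :=
  fun p =>
    if ((p.2.2.val : ZMod 3) - (p.2.1.val : ZMod 3) = (p.1.val : ZMod 3)) then 3 else 0

/-- Auxiliary: the cyclically shifted Latin table, a second point of the fiber. -/
def shiftTable : Fin 3 × Fin 3 × Fin 3 → ℤ :=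
  fun p =>
    if ((p.2.2.val : ZMod 3) - (p.2.1.val : ZMod 3) = (p.1.val : ZMod 3) + 1) then 3 else 0

/-- Negating a basic move gives a basic move (swap `i` and `i'`). -/
lemma neg_basicMove {I J K : ℕ} (i i' : Fin I) (j j' : Fin J) (k k' : Fin K) :
    -basicMove i i' j j' k k' = basicMove i' i j j' k k' := by
  funext p
  simp only [Pi.neg_apply, basicMove]
  ring

lemma basicMoves_neg {I J K : ℕ} {x : Fin I × Fin J × Fin K → ℤ}
    (hx : x ∈ basicMoves I J K) : -x ∈ basicMoves I J K := by
  obtain ⟨i, i', j, j', k, k', hi, hj, hk, rfl⟩ := hx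
  exact ⟨i', i, j, j', k, k', hi.symm, hj, hk, neg_basicMove i i' j j' k k'⟩

/-- Adding any basic move to `latinTable` makes some entry negative. -/
lemma latinTable_add_basicMove_neg :
    ∀ i i' j j' k k' : Fin 3, i ≠ i' → j ≠ j' → k ≠ k' →
      ∃ p, (latinTable + basicMove i i' j j' k k') p < 0 := by decide

/-- For the table `latinTable`: (1) adding any basic move produces a negative
entry, so `latinTable` is an isolated vertex of the fiber graph with basic
moves; (2) its fiber contains another table.  Consequently the set of basic
moves does not connect all tables in the fiber of `latinTable`. -/
theorem latinTable_isolated_and_fiber_not_connected :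
    (∀ x ∈ basicMoves 3 3 3, ∃ p, (latinTable + x) p < 0) ∧
    (∃ u : Fin 3 × Fin 3 × Fin 3 → ℤ,
      (∀ p, 0 ≤ u p) ∧ margins u = margins latinTable ∧ u ≠ latinTable) ∧
    ¬ tblConnectsOn (basicMoves 3 3 3)
        (fun u => (∀ p, 0 ≤ u p) ∧ margins u = margins latinTable) := by
  have h1 : ∀ x ∈ basicMoves 3 3 3, ∃ p, (latinTable + x) p < 0 := by
    rintro x ⟨i, i', j, j', k, k', hi, hj, hk, rfl⟩
    exact latinTable_add_basicMove_neg i i' j j' k k' hi hj hk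
  have h2 : (∀ p, 0 ≤ shiftTable p) ∧ margins shiftTable = margins latinTable ∧
      shiftTable ≠ latinTable := ⟨by decide, by decide, by decide⟩
  refine ⟨h1, ⟨shiftTable, h2⟩, ?_⟩
  intro hcon
  have hT : (∀ p, (0:ℤ) ≤ latinTable p) ∧ margins latinTable = margins latinTable :=
    ⟨by decide, rfl⟩
  have hrt := hcon latinTable shiftTable hT ⟨h2.1, h2.2.1⟩
  rcases hrt.cases_head with heq | ⟨c, hstep, _⟩
  · exact h2.2.2 heq.symm
  · obtain ⟨_, hc, hmem⟩ := hstep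
    have hmem' : c - latinTable ∈ basicMoves 3 3 3 := by
      rcases hmem with h | h
      · have := basicMoves_neg h
        simpa [neg_sub] using this
      · exact h
    obtain ⟨p, hp⟩ := h1 _ hmem'
    have hcp : (latinTable + (c - latinTable)) = c := by ring
    rw [hcp] at hp
    exact absurd (hc.1 p) (not_le.mpr hp)
end

section
/- Let T be the 3×3×3 nonnegative integer table defined by T_{ijk} = 3 if k − j ≡ i − 1 (mod 3) and T_{ijk} = 0 otherwise, and let b be the vector of two-way margins of T. Then there exists a table u ∈ F_{A,b} with u ≠ T and a finite sequence of basic moves leading from T to u in which every intermediate table has all entries ≥ −1; that is, allowing cell counts to be −1, T is connected by basic moves to other tables in its fiber. -/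
def tbl1 : Fin 3 × Fin 3 × Fin 3 → ℤ :=
  fun p => !![2,1,0,1,2,0,0,0,3;1,2,0,-1,1,3,3,0,0;0,0,3,3,0,0,0,3,0] p.1 (⟨(3 * p.2.1.val + p.2.2.val) % 9, Nat.mod_lt _ (by decide)⟩ : Fin 9)

def tblU : Fin 3 × Fin 3 × Fin 3 → ℤ :=
  fun p => !![2,1,0,0,2,1,1,0,2;1,2,0,0,1,2,2,0,1;0,0,3,3,0,0,0,3,0] p.1 (⟨(3 * p.2.1.val + p.2.2.val) % 9, Nat.mod_lt _ (by decide)⟩ : Fin 9)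


lemma stepA : tblStep (basicMoves 3 3 3)
    (fun w => (∀ p, (-1 : ℤ) ≤ w p) ∧ margins w = margins latinTable)
    latinTable tbl1 := by
  refine ⟨⟨by decide, rfl⟩, ⟨by decide, by decide⟩, Or.inl ?_⟩
  exact ⟨0, 1, 0, 1, 0, 1, by decide, by decide, by decide, by decide⟩

lemma stepB : tblStep (basicMoves 3 3 3)
    (fun w => (∀ p, (-1 : ℤ) ≤ w p) ∧ margins w = margins latinTable)
    tbl1 tblU := by
  refine ⟨⟨by decide, by decide⟩, ⟨by decide, by decide⟩, Or.inl ?_⟩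
  exact ⟨0, 1, 1, 2, 0, 2, by decide, by decide, by decide, by decide⟩

/-- Allowing cell counts to be `-1`, the table `latinTable` is connected by
basic moves to some other table of its fiber: there is a table `u ≠ latinTable`
with the same two-way margins, nonnegative entries, and a finite sequence of
basic moves from `latinTable` to `u` whose intermediate tables all have
entries `≥ -1`. -/
theorem latinTable_extConnected_to_another_table :
    ∃ u : Fin 3 × Fin 3 × Fin 3 → ℤ,
      (∀ p, 0 ≤ u p) ∧ margins u = margins latinTable ∧ u ≠ latinTable ∧
      Relation.ReflTransGen
        (tblStep (basicMoves 3 3 3)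
          (fun w => (∀ p, (-1 : ℤ) ≤ w p) ∧ margins w = margins latinTable))
        latinTable u := by
  refine ⟨tblU, by decide, by decide, by decide, ?_⟩
  exact Relation.ReflTransGen.head stepA (Relation.ReflTransGen.single stepB)
end
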